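/- arXiv:2001.05417 — 5 statements merged into one kernel-verified Lean document; each statement's English description precedes it below -/
import Mathlib

section
/- For a triple of twists, the polynomial [v₁, ω₂, ω₃] + [ω₁, v₂, ω₃] + [ω₁, ω₂, v₃] is invariant under the simultaneous adjoint action of SE(3): it is unchanged when each (ωᵢ, vᵢ) is replaced by (Rωᵢ, (Rωᵢ)×r + Rvᵢ). -/
open Matrix

/-- Determinant of the 3×3 matrix with columns `a`, `b`, `c`. -/
def colDet (a b c : Fin 3 → ℝ) : ℝ := Matrix.det (Matrix.of ![a, b, c])ᵀ

lemma colDet_expand (a b c : Fin 3 → ℝ) : colDet a b c =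
    a 0 * (b 1 * c 2 - b 2 * c 1) - b 0 * (a 1 * c 2 - a 2 * c 1)
      + c 0 * (a 1 * b 2 - a 2 * b 1) := by
  rw [colDet, Matrix.det_transpose, Matrix.det_fin_three]; simp; ring

lemma cross_expand (a r : Fin 3 → ℝ) : a ⨯₃ r =
    ![a 1 * r 2 - a 2 * r 1, a 2 * r 0 - a 0 * r 2, a 0 * r 1 - a 1 * r 0] := by
  simp [crossProduct]

lemma mulVec_expand (R : Matrix (Fin 3) (Fin 3) ℝ) (a : Fin 3 → ℝ) (i : Fin 3) :
    R.mulVec a i = R i 0 * a 0 + R i 1 * a 1 + R i 2 * a 2 := by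
  simp [Matrix.mulVec, dotProduct, Fin.sum_univ_three]

lemma colDet_rot (R : Matrix (Fin 3) (Fin 3) ℝ) (a b c : Fin 3 → ℝ) :
    colDet (R.mulVec a) (R.mulVec b) (R.mulVec c) = R.det * colDet a b c := by
  rw [colDet_expand, colDet_expand, Matrix.det_fin_three]
  simp only [mulVec_expand]
  ring

lemma colDet_crossSum (a b c r : Fin 3 → ℝ) :
    colDet (a ⨯₃ r) b c + colDet a (b ⨯₃ r) c + colDet a b (c ⨯₃ r) = 0 := by
  simp only [colDet_expand, cross_expand]
  simp only [Matrix.cons_val_zero, Matrix.cons_val_one, Matrix.head_cons,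
    Matrix.cons_val_two, Matrix.tail_cons]
  ring

lemma colDet_add₁ (x y b c : Fin 3 → ℝ) :
    colDet (x + y) b c = colDet x b c + colDet y b c := by
  simp only [colDet_expand, Pi.add_apply]; ring

lemma colDet_add₂ (a x y c : Fin 3 → ℝ) :
    colDet a (x + y) c = colDet a x c + colDet a y c := by
  simp only [colDet_expand, Pi.add_apply]; ring

lemma colDet_add₃ (a b x y : Fin 3 → ℝ) :
    colDet a b (x + y) = colDet a b x + colDet a b y := by
  simp only [colDet_expand, Pi.add_apply]; ring

theorem triple_mixed_det_sum_invariant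
    (R : Matrix (Fin 3) (Fin 3) ℝ) (hR : Rᵀ * R = 1) (hdet : R.det = 1)
    (r ω₁ v₁ ω₂ v₂ ω₃ v₃ : Fin 3 → ℝ) :
    colDet ((R.mulVec ω₁) ⨯₃ r + R.mulVec v₁) (R.mulVec ω₂) (R.mulVec ω₃)
      + colDet (R.mulVec ω₁) ((R.mulVec ω₂) ⨯₃ r + R.mulVec v₂) (R.mulVec ω₃)
      + colDet (R.mulVec ω₁) (R.mulVec ω₂) ((R.mulVec ω₃) ⨯₃ r + R.mulVec v₃)
      = colDet v₁ ω₂ ω₃ + colDet ω₁ v₂ ω₃ + colDet ω₁ ω₂ v₃ := by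
  rw [colDet_add₁, colDet_add₂, colDet_add₃]
  have h := colDet_crossSum (R.mulVec ω₁) (R.mulVec ω₂) (R.mulVec ω₃) r
  rw [colDet_rot, colDet_rot, colDet_rot, hdet]
  linarith
end

section
/- Every polynomial in ℝ[ω₁, ω₂, ω₃, v₁, v₂, v₃] invariant under the translation action (ω, v) ↦ (ω, ω×r + v) for all r ∈ ℝ³ lies in the subalgebra generated by ω₁, ω₂, ω₃ and ω·v = ω₁v₁ + ω₂v₂ + ω₃v₃. -/
open MvPolynomial

/-- Substitution realizing the translation action `(ω, v) ↦ (ω, ω×r + v)` on the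
polynomial ring `ℝ[ω₁, ω₂, ω₃, v₁, v₂, v₃]` (variables `0,1,2` are `ω`, `3,4,5` are `v`). -/
noncomputable def transSub (r : Fin 3 → ℝ) : Fin 6 → MvPolynomial (Fin 6) ℝ :=
  ![X 0, X 1, X 2,
    X 1 * C (r 2) - X 2 * C (r 1) + X 3,
    X 2 * C (r 0) - X 0 * C (r 2) + X 4,
    X 0 * C (r 1) - X 1 * C (r 0) + X 5]

namespace TrInv

@[simp]
lemma cons_val_five {m : ℕ} {α : Type*} (x : α) (u : Fin m.succ.succ.succ.succ.succ → α) :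
    Matrix.vecCons x u 5 = Matrix.vecHead
      (Matrix.vecTail (Matrix.vecTail (Matrix.vecTail (Matrix.vecTail u)))) :=
  rfl

noncomputable def Pv : MvPolynomial (Fin 6) ℝ := X 0 * X 3 + X 1 * X 4 + X 2 * X 5

noncomputable def sσ : Fin 6 → MvPolynomial (Fin 6) ℝ :=
  ![X 0, X 1, X 2, X 0 * X 3, X 0 * X 4, X 0 * X 5]

noncomputable def tτ : Fin 6 → MvPolynomial (Fin 6) ℝ := ![X 0, X 1, X 2, Pv, 0, 0]

noncomputable def Egen : Fin 6 → MvPolynomial (Fin 6) (MvPolynomial (Fin 3) ℝ) :=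
  ![X 0, X 1, X 2,
    X 1 * C (X 2) - X 2 * C (X 1) + X 3,
    X 2 * C (X 0) - X 0 * C (X 2) + X 4,
    X 0 * C (X 1) - X 1 * C (X 0) + X 5]

lemma step1 (r : Fin 3 → ℝ) (f : MvPolynomial (Fin 6) ℝ) :
    MvPolynomial.map (eval r) (aeval Egen f) = bind₁ (transSub r) f := by
  induction f using MvPolynomial.induction_on with
  | C a => simp [algebraMap_eq, MvPolynomial.algebraMap_apply]
  | add p q hp hq => simp [hp, hq]
  | mul_X p i hp =>
      rw [map_mul, map_mul, hp, map_mul, bind₁_X_right]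
      congr 1
      fin_cases i <;>
        simp [Egen, transSub]

lemma step2 (f : MvPolynomial (Fin 6) ℝ)
    (hf : ∀ r : Fin 3 → ℝ, MvPolynomial.bind₁ (transSub r) f = f) :
    aeval Egen f = MvPolynomial.map (algebraMap ℝ (MvPolynomial (Fin 3) ℝ)) f := by
  apply MvPolynomial.ext
  intro m
  apply MvPolynomial.funext
  intro r
  rw [← coeff_map, ← coeff_map, step1 r f, hf r]
  rw [MvPolynomial.map_map,
    show ((eval r).comp (algebraMap ℝ (MvPolynomial (Fin 3) ℝ))) = RingHom.id ℝ from
      RingHom.ext fun a => by simp [MvPolynomial.algebraMap_eq],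
    MvPolynomial.map_id]

noncomputable def q3 : Fin 3 → MvPolynomial (Fin 6) ℝ := ![0, -X 5, X 4]

noncomputable def Θ :
    MvPolynomial (Fin 6) (MvPolynomial (Fin 3) ℝ) →+* MvPolynomial (Fin 6) ℝ :=
  eval₂Hom ((aeval q3 : MvPolynomial (Fin 3) ℝ →ₐ[ℝ] MvPolynomial (Fin 6) ℝ) :
    MvPolynomial (Fin 3) ℝ →+* MvPolynomial (Fin 6) ℝ) sσ

lemma step3 (f : MvPolynomial (Fin 6) ℝ) : Θ (aeval Egen f) = bind₁ tτ f := by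
  induction f using MvPolynomial.induction_on with
    | C a => simp [Θ, algebraMap_eq, MvPolynomial.algebraMap_apply]
    | add p q hp hq => simp [hp, hq]
    | mul_X p i hp =>
        rw [map_mul, map_mul, hp, map_mul, bind₁_X_right]
        refine congrArg (bind₁ tτ p * ·) ?_
        fin_cases i <;>
          simp [Egen, tτ, sσ, q3, Pv, Θ] <;> ring

lemma key (f : MvPolynomial (Fin 6) ℝ)
    (hf : ∀ r : Fin 3 → ℝ, MvPolynomial.bind₁ (transSub r) f = f) :
    bind₁ sσ f = bind₁ tτ f := by
  have h2 : Θ (MvPolynomial.map (algebraMap ℝ (MvPolynomial (Fin 3) ℝ)) f)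
      = bind₁ sσ f := by
    rw [Θ, coe_eval₂Hom, eval₂_map]
    rw [show (((aeval q3 : MvPolynomial (Fin 3) ℝ →ₐ[ℝ] MvPolynomial (Fin 6) ℝ) :
        MvPolynomial (Fin 3) ℝ →+* MvPolynomial (Fin 6) ℝ).comp
        (algebraMap ℝ (MvPolynomial (Fin 3) ℝ))) = algebraMap ℝ (MvPolynomial (Fin 6) ℝ)
      from RingHom.ext fun a => by simp]
    rfl
  rw [← h2, ← step2 f hf, step3]


def wt : Fin 6 → ℕ := ![0, 0, 0, 1, 1, 1]

lemma wt_weight (m : Fin 6 →₀ ℕ) : (Finsupp.weight wt) m = m 3 + m 4 + m 5 := by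
  rw [Finsupp.weight_apply, Finsupp.sum_fintype]
  · rw [Fin.sum_univ_six]
    simp [wt]
  · intro i; simp

lemma bind₁_monomial_univ (g : Fin 6 → MvPolynomial (Fin 6) ℝ) (m : Fin 6 →₀ ℕ) (c : ℝ) :
    bind₁ g (monomial m c) = C c * ∏ i : Fin 6, g i ^ m i := by
  rw [bind₁_monomial]
  congr 1
  exact Finset.prod_subset (Finset.subset_univ _) fun i _ hi => by
    rw [Finsupp.notMem_support_iff.mp hi, pow_zero]

lemma monomial_eq_univ (m : Fin 6 →₀ ℕ) (c : ℝ) :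
    monomial m c = C c * ∏ i : Fin 6, (X i : MvPolynomial (Fin 6) ℝ) ^ m i := by
  rw [monomial_eq]
  congr 1
  rw [Finsupp.prod_fintype]
  intro i; rw [pow_zero]

lemma bind_sσ_monomial (m : Fin 6 →₀ ℕ) (c : ℝ) :
    bind₁ sσ (monomial m c) = X 0 ^ (m 3 + m 4 + m 5) * monomial m c := by
  rw [bind₁_monomial_univ, monomial_eq_univ, Fin.prod_univ_six, Fin.prod_univ_six]
  simp only [sσ, Matrix.cons_val_zero, Matrix.cons_val_one, Matrix.head_cons,
    Matrix.cons_val_two, Matrix.tail_cons, Matrix.cons_val_three, Matrix.cons_val_four,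
    cons_val_five]
  rw [mul_pow, mul_pow, mul_pow]
  ring

lemma bind_sσ_homog {g : MvPolynomial (Fin 6) ℝ} {k : ℕ}
    (hg : IsWeightedHomogeneous wt g k) :
    bind₁ sσ g = X 0 ^ k * g := by
  conv_lhs => rw [← support_sum_monomial_coeff g]
  conv_rhs => rw [← support_sum_monomial_coeff g]
  rw [map_sum, Finset.mul_sum]
  refine Finset.sum_congr rfl fun m hm => ?_
  rw [bind_sσ_monomial]
  have : (Finsupp.weight wt) m = k := hg (mem_support_iff.mp hm)
  rw [wt_weight] at this
  rw [this]

lemma pow_homog {g : MvPolynomial (Fin 6) ℝ} {n : ℕ} (h : IsWeightedHomogeneous wt g n)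
    (k : ℕ) : IsWeightedHomogeneous wt (g ^ k) (k * n) := by
  induction k with
  | zero => simpa using isWeightedHomogeneous_one ℝ wt
  | succ k ih =>
      have := ih.mul h
      rw [pow_succ]
      convert this using 1
      ring

lemma X0_homog : IsWeightedHomogeneous wt (X 0 : MvPolynomial (Fin 6) ℝ) 0 :=
  isWeightedHomogeneous_X ℝ wt 0

lemma Pv_homog : IsWeightedHomogeneous wt Pv 1 := by
  have h03 := (isWeightedHomogeneous_X ℝ wt 0).mul (isWeightedHomogeneous_X ℝ wt 3)
  have h14 := (isWeightedHomogeneous_X ℝ wt 1).mul (isWeightedHomogeneous_X ℝ wt 4)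
  have h25 := (isWeightedHomogeneous_X ℝ wt 2).mul (isWeightedHomogeneous_X ℝ wt 5)
  exact (h03.add h14).add h25

lemma component_bind_sσ (f : MvPolynomial (Fin 6) ℝ) (k : ℕ) :
    weightedHomogeneousComponent wt k (bind₁ sσ f)
      = X 0 ^ k * weightedHomogeneousComponent wt k f := by
  classical
  have hfin := weightedHomogeneousComponent_finsupp (w := wt) f
  have hdec : bind₁ sσ f
      = ∑ j ∈ hfin.toFinset, bind₁ sσ (weightedHomogeneousComponent wt j f) := by
    rw [← map_sum, ← finsum_eq_sum _ hfin, sum_weightedHomogeneousComponent]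
  rw [hdec, map_sum]
  have hterm : ∀ j ∈ hfin.toFinset,
      weightedHomogeneousComponent wt k (bind₁ sσ (weightedHomogeneousComponent wt j f))
        = if k = j then X 0 ^ k * weightedHomogeneousComponent wt k f else 0 := by
    intro j _
    rw [bind_sσ_homog (weightedHomogeneousComponent_isWeightedHomogeneous j f)]
    have hmem : X 0 ^ j * weightedHomogeneousComponent wt j f
        ∈ weightedHomogeneousSubmodule ℝ wt j := by
      rw [mem_weightedHomogeneousSubmodule]
      have := (pow_homog X0_homog j).mul
        (weightedHomogeneousComponent_isWeightedHomogeneous j f)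
      simpa using this
    rw [weightedHomogeneousComponent_of_mem hmem]
    split_ifs with h
    · subst h; rfl
    · rfl
  rw [Finset.sum_congr rfl hterm, Finset.sum_ite_eq]
  split_ifs with h
  · rfl
  · replace h : weightedHomogeneousComponent wt k f = 0 :=
      not_not.mp fun hc => h ((Set.Finite.mem_toFinset hfin).mpr hc)
    rw [h, mul_zero]

noncomputable def κfun : Fin 6 → MvPolynomial (Fin 6) ℝ := ![X 0, X 1, X 2, 0, 0, 0]

lemma component_bind_tτ (f : MvPolynomial (Fin 6) ℝ) (k : ℕ) :
    ∃ b ∈ supported ℝ ({0,1,2} : Set (Fin 6)),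
      weightedHomogeneousComponent wt k (bind₁ tτ f) = b * Pv ^ k := by
  classical
  set M : Submodule ℝ (MvPolynomial (Fin 6) ℝ) :=
    Submodule.map (LinearMap.mulRight ℝ (Pv ^ k))
      (Subalgebra.toSubmodule (supported ℝ ({0,1,2} : Set (Fin 6)))) with hM
  suffices h : weightedHomogeneousComponent wt k (bind₁ tτ f) ∈ M by
    obtain ⟨b, hb, heq⟩ := h
    exact ⟨b, hb, heq.symm⟩
  have hsum : weightedHomogeneousComponent wt k (bind₁ tτ f)
      = ∑ m ∈ f.support,
          weightedHomogeneousComponent wt k (bind₁ tτ (monomial m (coeff m f))) := by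
    conv_lhs => rw [← support_sum_monomial_coeff f]
    rw [map_sum, map_sum]
  rw [hsum]
  apply Submodule.sum_mem
  intro m _
  by_cases h4 : m 4 = 0
  · by_cases h5 : m 5 = 0
    · have hexp : bind₁ tτ (monomial m (coeff m f))
          = (C (coeff m f) * X 0 ^ m 0 * X 1 ^ m 1 * X 2 ^ m 2) * Pv ^ m 3 := by
        rw [bind₁_monomial_univ, Fin.prod_univ_six]
        simp only [tτ, Matrix.cons_val_zero, Matrix.cons_val_one, Matrix.head_cons,
          Matrix.cons_val_two, Matrix.tail_cons, Matrix.cons_val_three, Matrix.cons_val_four,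
          cons_val_five, h4, h5, pow_zero]
        ring
      have hb : (C (coeff m f) * X 0 ^ m 0 * X 1 ^ m 1 * X 2 ^ m 2)
          ∈ supported ℝ ({0,1,2} : Set (Fin 6)) := by
        refine mul_mem (mul_mem (mul_mem ?_ ?_) ?_) ?_
        · exact MvPolynomial.algebraMap_eq ℝ (Fin 6) ▸
            Subalgebra.algebraMap_mem _ (coeff m f)
        · exact pow_mem ((X_mem_supported).2 (by simp)) _
        · exact pow_mem ((X_mem_supported).2 (by simp)) _
        · exact pow_mem ((X_mem_supported).2 (by simp)) _
      have hpre : IsWeightedHomogeneous wt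
          (C (coeff m f) * X 0 ^ m 0 * X 1 ^ m 1 * X 2 ^ m 2) 0 := by
        have hc := isWeightedHomogeneous_C (R := ℝ) wt (coeff m f)
        have h0 := pow_homog X0_homog (m 0)
        have h1 := pow_homog (isWeightedHomogeneous_X ℝ wt 1) (m 1)
        have h2 := pow_homog (isWeightedHomogeneous_X ℝ wt 2) (m 2)
        have := ((hc.mul h0).mul h1).mul h2
        simpa [wt] using this
      have hhom : IsWeightedHomogeneous wt
          ((C (coeff m f) * X 0 ^ m 0 * X 1 ^ m 1 * X 2 ^ m 2) * Pv ^ m 3) (m 3) := by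
        have := hpre.mul (pow_homog Pv_homog (m 3))
        simpa using this
      rw [hexp, weightedHomogeneousComponent_of_mem
        ((mem_weightedHomogeneousSubmodule _ _ _ _).2 hhom)]
      split_ifs with hk
      · subst hk
        exact ⟨_, hb, rfl⟩
      · exact M.zero_mem
    · have hz : bind₁ tτ (monomial m (coeff m f)) = 0 := by
        rw [bind₁_monomial_univ, Fin.prod_univ_six]
        simp only [tτ, Matrix.cons_val_zero, Matrix.cons_val_one, Matrix.head_cons,
          Matrix.cons_val_two, Matrix.tail_cons, Matrix.cons_val_three, Matrix.cons_val_four,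
          cons_val_five]
        rw [zero_pow h5]
        ring
      rw [hz, map_zero]
      exact M.zero_mem
  · have hz : bind₁ tτ (monomial m (coeff m f)) = 0 := by
      rw [bind₁_monomial_univ, Fin.prod_univ_six]
      simp only [tτ, Matrix.cons_val_zero, Matrix.cons_val_one, Matrix.head_cons,
        Matrix.cons_val_two, Matrix.tail_cons, Matrix.cons_val_three, Matrix.cons_val_four,
        cons_val_five]
      rw [zero_pow h4]
      ring
    rw [hz, map_zero]
    exact M.zero_mem

lemma primeX0 : Prime (X 0 : MvPolynomial (Fin 6) ℝ) := by
  have h : Prime ((MvPolynomial.finSuccEquiv ℝ 5) (X 0)) := by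
    rw [MvPolynomial.finSuccEquiv_X_zero]
    exact Polynomial.prime_X
  exact (MulEquiv.prime_iff (MvPolynomial.finSuccEquiv ℝ 5).toRingEquiv.toMulEquiv).mp h

lemma X0_not_dvd_Pv : ¬ (X 0 : MvPolynomial (Fin 6) ℝ) ∣ Pv := by
  rintro ⟨t, ht⟩
  have h := congrArg (eval (![0, 1, 1, 1, 1, 1] : Fin 6 → ℝ)) ht
  simp [Pv] at h

lemma kappa_fix {b : MvPolynomial (Fin 6) ℝ}
    (hb : b ∈ supported ℝ ({0,1,2} : Set (Fin 6))) : aeval κfun b = b := by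
  have hb' : b ∈ Algebra.adjoin ℝ
      (X '' ({0,1,2} : Set (Fin 6)) : Set (MvPolynomial (Fin 6) ℝ)) := hb
  clear hb
  induction hb' using Algebra.adjoin_induction with
  | mem x hx =>
      obtain ⟨i, hi, rfl⟩ := hx
      simp only [Set.mem_insert_iff, Set.mem_singleton_iff] at hi
      rcases hi with rfl | rfl | rfl <;> simp [κfun]
  | algebraMap r => simp
  | add x y _ _ hx hy => rw [map_add, hx, hy]
  | mul x y _ _ hx hy => rw [map_mul, hx, hy]

lemma aeval_mem_A {g : Fin 6 → MvPolynomial (Fin 6) ℝ}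
    (hg : ∀ i, g i ∈ Algebra.adjoin ℝ ({X 0, X 1, X 2, Pv} : Set (MvPolynomial (Fin 6) ℝ)))
    (p : MvPolynomial (Fin 6) ℝ) :
    aeval g p ∈ Algebra.adjoin ℝ ({X 0, X 1, X 2, Pv} : Set (MvPolynomial (Fin 6) ℝ)) := by
  induction p using MvPolynomial.induction_on with
  | C a => rw [aeval_C]; exact Subalgebra.algebraMap_mem _ a
  | add p q hp hq => rw [map_add]; exact add_mem hp hq
  | mul_X p i hp => rw [map_mul, aeval_X]; exact mul_mem hp (hg i)

lemma XPv_mem (i : Fin 6) : κfun i ∈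
    Algebra.adjoin ℝ ({X 0, X 1, X 2, Pv} : Set (MvPolynomial (Fin 6) ℝ)) := by
  have h0 : (X 0 : MvPolynomial (Fin 6) ℝ)
      ∈ Algebra.adjoin ℝ ({X 0, X 1, X 2, Pv} : Set (MvPolynomial (Fin 6) ℝ)) :=
    Algebra.subset_adjoin (by simp)
  have h1 : (X 1 : MvPolynomial (Fin 6) ℝ)
      ∈ Algebra.adjoin ℝ ({X 0, X 1, X 2, Pv} : Set (MvPolynomial (Fin 6) ℝ)) :=
    Algebra.subset_adjoin (by simp)
  have h2 : (X 2 : MvPolynomial (Fin 6) ℝ)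
      ∈ Algebra.adjoin ℝ ({X 0, X 1, X 2, Pv} : Set (MvPolynomial (Fin 6) ℝ)) :=
    Algebra.subset_adjoin (by simp)
  fin_cases i
  · exact h0
  · exact h1
  · exact h2
  · exact zero_mem _
  · exact zero_mem _
  · exact zero_mem _

end TrInv

theorem translation_invariants_generated
    (f : MvPolynomial (Fin 6) ℝ)
    (hf : ∀ r : Fin 3 → ℝ, MvPolynomial.bind₁ (transSub r) f = f) :
    f ∈ Algebra.adjoin ℝ
      ({X 0, X 1, X 2, X 0 * X 3 + X 1 * X 4 + X 2 * X 5} :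
        Set (MvPolynomial (Fin 6) ℝ)) := by
  classical
  show f ∈ Algebra.adjoin ℝ ({X 0, X 1, X 2, TrInv.Pv} : Set (MvPolynomial (Fin 6) ℝ))
  have hk : ∀ k : ℕ, weightedHomogeneousComponent TrInv.wt k f
      ∈ Algebra.adjoin ℝ ({X 0, X 1, X 2, TrInv.Pv} : Set (MvPolynomial (Fin 6) ℝ)) := by
    intro k
    obtain ⟨b, hbB, hbeq⟩ := TrInv.component_bind_tτ f k
    have hXk : X 0 ^ k * weightedHomogeneousComponent TrInv.wt k f = b * TrInv.Pv ^ k := by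
      rw [← TrInv.component_bind_sσ, TrInv.key f hf, hbeq]
    have hne : (X 0 : MvPolynomial (Fin 6) ℝ) ^ k ≠ 0 :=
      pow_ne_zero _ (MvPolynomial.X_ne_zero _)
    have hdvd : (X 0 : MvPolynomial (Fin 6) ℝ) ^ k ∣ b := by
      refine TrInv.primeX0.pow_dvd_of_dvd_mul_right k
        (fun hc => TrInv.X0_not_dvd_Pv (TrInv.primeX0.dvd_of_dvd_pow hc))
        ⟨weightedHomogeneousComponent TrInv.wt k f, hXk.symm⟩
    obtain ⟨D, hD⟩ := hdvd
    have hfk : weightedHomogeneousComponent TrInv.wt k f = D * TrInv.Pv ^ k := by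
      apply mul_left_cancel₀ hne
      rw [hXk, hD]; ring
    have hDfix : aeval TrInv.κfun D = D := by
      have h1 := TrInv.kappa_fix hbB
      rw [hD, map_mul, map_pow, aeval_X] at h1
      have hx0 : TrInv.κfun 0 = X 0 := rfl
      rw [hx0] at h1
      exact mul_left_cancel₀ hne h1
    rw [hfk]
    exact mul_mem (hDfix ▸ TrInv.aeval_mem_A TrInv.XPv_mem D)
      (pow_mem (Algebra.subset_adjoin (by simp)) k)
  rw [← sum_weightedHomogeneousComponent TrInv.wt f,
    finsum_eq_sum _ (weightedHomogeneousComponent_finsupp f)]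
  exact Subalgebra.sum_mem _ fun k _ => hk k
end

section
/- Every polynomial in ℝ[ω₁, ω₂, ω₃, v₁, v₂, v₃] invariant under the adjoint action of SE(3) lies in the subalgebra ℝ[ω·ω, ω·v] generated by the Killing form ω·ω and the Klein form ω·v. -/
open Matrix MvPolynomial

/-- Coordinates of a twist `(ω, v)` as a point of `ℝ⁶`. -/
def twistCoords (ω v : Fin 3 → ℝ) : Fin 6 → ℝ := Fin.append ω v

namespace AdjInv

variable {R : Type*} [CommRing R]

def qM (w x y z : R) : Matrix (Fin 3) (Fin 3) R :=
  !![w^2+x^2-y^2-z^2, 2*(x*y-w*z), 2*(x*z+w*y);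
     2*(x*y+w*z), w^2-x^2+y^2-z^2, 2*(y*z-w*x);
     2*(x*z-w*y), 2*(y*z+w*x), w^2-x^2-y^2+z^2]

def qρ (w x y z : R) : R := w^2+x^2+y^2+z^2

set_option maxHeartbeats 1000000 in
lemma qM_transpose_mul (w x y z : R) :
    (qM w x y z)ᵀ * qM w x y z = (qρ w x y z)^2 • 1 := by
  ext i j
  rw [Matrix.mul_apply, Fin.sum_univ_three]
  fin_cases i <;> fin_cases j <;>
    simp [qM, qρ, Matrix.one_apply] <;> ring

set_option maxHeartbeats 1000000 in
lemma qM_det (w x y z : R) : (qM w x y z).det = (qρ w x y z)^3 := by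
  simp [qM, qρ, Matrix.det_fin_three]; ring

set_option maxHeartbeats 1000000 in
lemma qM_dot (w x y z : R) (u u' : Fin 3 → R) :
    (qM w x y z).mulVec u ⬝ᵥ (qM w x y z).mulVec u' = (qρ w x y z)^2 * (u ⬝ᵥ u') := by
  simp [qM, qρ, Matrix.mulVec, dotProduct, Fin.sum_univ_three]; ring

lemma qM_one : qM (1:R) 0 0 0 = 1 := by
  ext i j
  fin_cases i <;> fin_cases j <;> simp [qM, Matrix.one_apply, Matrix.vecHead, Matrix.vecTail]

lemma qM_zero : qM (0:R) 0 0 0 = 0 := by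
  ext i j
  fin_cases i <;> fin_cases j <;>
    simp [qM, Matrix.vecHead, Matrix.vecTail]

set_option maxHeartbeats 1000000 in
lemma qM_rot (a : R) (ω ω' : Fin 3 → R) (hω : ω 0^2 + ω 1^2 + ω 2^2 = a)
    (hω' : ω' 0^2 + ω' 1^2 + ω' 2^2 = a) (i : Fin 3) :
    (qM (a + (ω 0*ω' 0 + ω 1*ω' 1 + ω 2*ω' 2))
        (ω 1*ω' 2 - ω 2*ω' 1) (ω 2*ω' 0 - ω 0*ω' 2) (ω 0*ω' 1 - ω 1*ω' 0)).mulVec ω i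
      = (2*a*(a + (ω 0*ω' 0 + ω 1*ω' 1 + ω 2*ω' 2))) * ω' i := by
  fin_cases i
  · simp [qM, Matrix.mulVec, dotProduct, Fin.sum_univ_three]
    linear_combination (2*(a + (ω 0*ω' 0 + ω 1*ω' 1 + ω 2*ω' 2))*ω' 0 - (ω' 0^2+ω' 1^2+ω' 2^2) * ω 0) * hω + (-(a * ω 0)) * hω'
  · simp [qM, Matrix.mulVec, dotProduct, Fin.sum_univ_three]
    linear_combination (2*(a + (ω 0*ω' 0 + ω 1*ω' 1 + ω 2*ω' 2))*ω' 1 - (ω' 0^2+ω' 1^2+ω' 2^2) * ω 1) * hω + (-(a * ω 1)) * hω'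
  · simp [qM, Matrix.mulVec, dotProduct, Fin.sum_univ_three]
    linear_combination (2*(a + (ω 0*ω' 0 + ω 1*ω' 1 + ω 2*ω' 2))*ω' 2 - (ω' 0^2+ω' 1^2+ω' 2^2) * ω 2) * hω + (-(a * ω 2)) * hω'

lemma qM_rot_rho (a : R) (ω ω' : Fin 3 → R) (hω : ω 0^2 + ω 1^2 + ω 2^2 = a)
    (hω' : ω' 0^2 + ω' 1^2 + ω' 2^2 = a) :
    qρ (a + (ω 0*ω' 0 + ω 1*ω' 1 + ω 2*ω' 2))
        (ω 1*ω' 2 - ω 2*ω' 1) (ω 2*ω' 0 - ω 0*ω' 2) (ω 0*ω' 1 - ω 1*ω' 0)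
      = 2*a*(a + (ω 0*ω' 0 + ω 1*ω' 1 + ω 2*ω' 2)) := by
  simp only [qρ]
  linear_combination (ω' 0^2+ω' 1^2+ω' 2^2) * hω + a * hω'


lemma eval_smul_homog {σ R : Type*} [CommSemiring R] {p : MvPolynomial σ R} {d : ℕ}
    (h : p.IsHomogeneous d) (c : R) (x : σ → R) :
    eval (c • x) p = c ^ d * eval x p := by
  rw [eval_eq, eval_eq, Finset.mul_sum]
  apply Finset.sum_congr rfl
  intro m hm
  have hdeg : ∑ i ∈ m.support, m i = d := by
    have h1 := h (MvPolynomial.mem_support_iff.mp hm)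
    rw [show (1 : σ → ℕ) = fun _ => 1 from rfl, ← Finsupp.degree_eq_weight_one] at h1
    exact h1
  calc p.coeff m * ∏ i ∈ m.support, (c • x) i ^ m i
      = p.coeff m * ∏ i ∈ m.support, (c ^ m i * x i ^ m i) := by
        simp [Pi.smul_apply, smul_eq_mul, mul_pow]
    _ = p.coeff m * ((∏ i ∈ m.support, c ^ m i) * ∏ i ∈ m.support, x i ^ m i) := by
        rw [Finset.prod_mul_distrib]
    _ = c ^ d * (p.coeff m * ∏ i ∈ m.support, x i ^ m i) := by
        rw [Finset.prod_pow_eq_pow_sum, hdeg]; ring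

lemma aeval_eq_eval' {σ R : Type*} [CommSemiring R] (x : σ → R) (p : MvPolynomial σ R) :
    aeval x p = eval x p := by
  rw [aeval_def, Algebra.algebraMap_self]
  rfl

lemma eval_aeval' {σ τ R : Type*} [CommSemiring R] (x : τ → R)
    (g : σ → MvPolynomial τ R) (p : MvPolynomial σ R) :
    eval x (aeval g p) = eval (fun i => eval x (g i)) p := by
  have h := comp_aeval_apply (aeval x : MvPolynomial τ R →ₐ[R] R) (f := g) (p := p)
  simpa [aeval_eq_eval'] using h

lemma aevalC_aeval {σ τ : Type*} (z : τ → ℂ) (g : σ → MvPolynomial τ ℝ)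
    (p : MvPolynomial σ ℝ) :
    aeval z (aeval g p) = aeval (fun i => aeval z (g i)) p :=
  comp_aeval_apply (aeval z : MvPolynomial τ ℝ →ₐ[ℝ] ℂ) (f := g) (p := p)

lemma aeval_ofReal {σ : Type*} (x : σ → ℝ) (p : MvPolynomial σ ℝ) :
    aeval (fun i => (x i : ℂ)) p = ((eval x p : ℝ) : ℂ) := by
  have h := comp_aeval_apply (Algebra.ofId ℝ ℂ) (f := x) (p := p)
  simpa [aeval_eq_eval', Algebra.ofId_apply, Complex.coe_algebraMap] using h.symm

lemma aeval_smul_homogC {σ : Type*} {p : MvPolynomial σ ℝ} {d : ℕ}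
    (h : p.IsHomogeneous d) (c : ℂ) (z : σ → ℂ) :
    aeval (c • z) p = c ^ d * aeval z p := by
  rw [aeval_def, aeval_def, eval₂_eq_eval_map, eval₂_eq_eval_map]
  exact eval_smul_homog (h.map _) c z

lemma aeval_homogeneousComponent {σ τ R : Type*} [CommRing R]
    (g : σ → MvPolynomial τ R) (hg : ∀ i, (g i).IsHomogeneous 1)
    (p : MvPolynomial σ R) (d : ℕ) :
    aeval g (homogeneousComponent d p) = homogeneousComponent d (aeval g p) := by
  conv_rhs => rw [← sum_homogeneousComponent p]
  rw [map_sum, map_sum]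
  have hterm : ∀ i ∈ Finset.range (p.totalDegree + 1),
      homogeneousComponent d (aeval g (homogeneousComponent i p))
        = if d = i then aeval g (homogeneousComponent i p) else 0 := by
    intro i _
    apply homogeneousComponent_of_mem
    rw [mem_homogeneousSubmodule]
    have := (homogeneousComponent_isHomogeneous i p).aeval g hg
    rwa [one_mul] at this
  rw [Finset.sum_congr rfl hterm, Finset.sum_ite_eq (Finset.range (p.totalDegree + 1))]
  by_cases hd : d ∈ Finset.range (p.totalDegree + 1)
  · rw [if_pos hd]
  · rw [if_neg hd]
    have hgt : p.totalDegree < d := by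
      simpa [Finset.mem_range, Nat.lt_succ_iff, not_le] using hd
    rw [homogeneousComponent_eq_zero _ _ hgt, map_zero]


noncomputable def reP {σ : Type*} (p : MvPolynomial σ ℂ) : MvPolynomial σ ℝ :=
  AddMonoidAlgebra.map Complex.reAddGroupHom p

lemma coeff_reP {σ : Type*} (p : MvPolynomial σ ℂ) (m : σ →₀ ℕ) :
    coeff m (reP p) = (coeff m p).re := rfl

lemma reP_add {σ : Type*} (p q : MvPolynomial σ ℂ) : reP (p + q) = reP p + reP q := by
  apply MvPolynomial.ext; intro m
  simp [coeff_reP, coeff_add]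

lemma reP_monomial {σ : Type*} (m : σ →₀ ℕ) (c : ℂ) :
    reP (monomial m c) = monomial m c.re := by
  classical
  apply MvPolynomial.ext; intro m'
  rw [coeff_reP, coeff_monomial, coeff_monomial, apply_ite Complex.re, Complex.zero_re]

lemma eval_reP {σ : Type*} (p : MvPolynomial σ ℂ) (y : σ → ℝ) :
    eval y (reP p) = (eval (fun i => (y i : ℂ)) p).re := by
  induction p using MvPolynomial.induction_on' with
  | monomial m c =>
    rw [reP_monomial, eval_monomial, eval_monomial]
    have : (Finsupp.prod m fun n e => ((y n : ℂ)) ^ e)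
        = ((Finsupp.prod m fun n e => (y n) ^ e : ℝ) : ℂ) := by
      rw [Finsupp.prod, Finsupp.prod]
      push_cast
      rfl
    rw [this, Complex.mul_re]
    simp
  | add p q hp hq =>
    rw [reP_add, map_add, map_add, Complex.add_re, hp, hq]


def ωof {α : Type*} (x : Fin 6 → α) : Fin 3 → α := fun i => x (Fin.castAdd 3 i)
def vof {α : Type*} (x : Fin 6 → α) : Fin 3 → α := fun i => x (Fin.natAdd 3 i)

lemma append_ωof_vof {α : Type*} (x : Fin 6 → α) : Fin.append (ωof x) (vof x) = x := by
  funext j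
  refine Fin.addCases (fun i => ?_) (fun i => ?_) j
  · rw [Fin.append_left]; rfl
  · rw [Fin.append_right]; rfl

/-- substitution polynomials for the group element (R, r) -/
noncomputable def Φg (R : Matrix (Fin 3) (Fin 3) ℝ) (r : Fin 3 → ℝ) :
    Fin 6 → MvPolynomial (Fin 6) ℝ :=
  Fin.append ((R.map C).mulVec (fun i => X (Fin.castAdd 3 i)))
    (((R.map C).mulVec (fun i => X (Fin.castAdd 3 i))) ⨯₃ (fun i => C (r i))
      + (R.map C).mulVec (fun i => X (Fin.natAdd 3 i)))

lemma Φg_homog (R : Matrix (Fin 3) (Fin 3) ℝ) (r : Fin 3 → ℝ) (j : Fin 6) :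
    (Φg R r j).IsHomogeneous 1 := by
  have hmul : ∀ (u : Fin 3 → MvPolynomial (Fin 6) ℝ), (∀ k, (u k).IsHomogeneous 1) →
      ∀ i, (((R.map C).mulVec u) i).IsHomogeneous 1 := by
    intro u hu i
    simp only [Matrix.mulVec, dotProduct, Matrix.map_apply]
    apply MvPolynomial.IsHomogeneous.sum
    intro k _
    simpa using (hu k).C_mul (R i k)
  have hX1 : ∀ k : Fin 3, ((X (Fin.castAdd 3 k) : MvPolynomial (Fin 6) ℝ)).IsHomogeneous 1 :=
    fun k => isHomogeneous_X _ _
  have hX2 : ∀ k : Fin 3, ((X (Fin.natAdd 3 k) : MvPolynomial (Fin 6) ℝ)).IsHomogeneous 1 :=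
    fun k => isHomogeneous_X _ _
  refine Fin.addCases (m := 3) (n := 3) (fun i => ?_) (fun i => ?_) j <;>
    [rw [Φg, Fin.append_left]; rw [Φg, Fin.append_right]]
  · exact hmul _ hX1 i
  · apply MvPolynomial.IsHomogeneous.add _ (hmul _ hX2 i)
    have h1 := hmul _ hX1
    have hmulC : ∀ (p : MvPolynomial (Fin 6) ℝ), p.IsHomogeneous 1 → ∀ c : ℝ,
        (p * C c).IsHomogeneous 1 := by
      intro p hp c; rw [mul_comm]; exact hp.C_mul c
    rw [cross_apply]
    fin_cases i <;>
      simp only [Matrix.cons_val_zero, Matrix.cons_val_one, Matrix.head_cons,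
        Matrix.cons_val_two, Matrix.tail_cons] <;>
      exact (hmulC _ (h1 _) _).sub (hmulC _ (h1 _) _)


lemma eval_Φg (R : Matrix (Fin 3) (Fin 3) ℝ) (r : Fin 3 → ℝ) (x : Fin 6 → ℝ) (j : Fin 6) :
    eval x (Φg R r j)
      = twistCoords (R.mulVec (ωof x)) ((R.mulVec (ωof x)) ⨯₃ r + R.mulVec (vof x)) j := by
  refine Fin.addCases (m := 3) (n := 3) (fun i => ?_) (fun i => ?_) j
  · rw [Φg, Fin.append_left, twistCoords, Fin.append_left]
    simp [Matrix.mulVec, dotProduct, Matrix.map_apply, ωof]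
  · rw [Φg, Fin.append_right, twistCoords, Fin.append_right]
    rw [Pi.add_apply, Pi.add_apply, cross_apply, cross_apply]
    fin_cases i <;>
      simp [Matrix.mulVec, dotProduct, Matrix.map_apply, ωof, vof,
        Fin.sum_univ_three] <;> ring

lemma sigma_fix (f : MvPolynomial (Fin 6) ℝ)
    (hf : ∀ R : Matrix (Fin 3) (Fin 3) ℝ, Rᵀ * R = 1 → R.det = 1 →
      ∀ r ω v : Fin 3 → ℝ,
        MvPolynomial.eval
          (twistCoords (R.mulVec ω) ((R.mulVec ω) ⨯₃ r + R.mulVec v)) f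
          = MvPolynomial.eval (twistCoords ω v) f)
    (R : Matrix (Fin 3) (Fin 3) ℝ) (h1 : Rᵀ * R = 1) (h2 : R.det = 1) (r : Fin 3 → ℝ) :
    aeval (Φg R r) f = f := by
  apply MvPolynomial.funext; intro x
  rw [eval_aeval']
  have hfun : (fun i => eval x (Φg R r i))
      = twistCoords (R.mulVec (ωof x)) ((R.mulVec (ωof x)) ⨯₃ r + R.mulVec (vof x)) :=
    funext (eval_Φg R r x)
  rw [hfun, hf R h1 h2 r (ωof x) (vof x), twistCoords, append_ωof_vof]

lemma hf_component (f : MvPolynomial (Fin 6) ℝ)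
    (hf : ∀ R : Matrix (Fin 3) (Fin 3) ℝ, Rᵀ * R = 1 → R.det = 1 →
      ∀ r ω v : Fin 3 → ℝ,
        MvPolynomial.eval
          (twistCoords (R.mulVec ω) ((R.mulVec ω) ⨯₃ r + R.mulVec v)) f
          = MvPolynomial.eval (twistCoords ω v) f)
    (d : ℕ) :
    ∀ R : Matrix (Fin 3) (Fin 3) ℝ, Rᵀ * R = 1 → R.det = 1 →
      ∀ r ω v : Fin 3 → ℝ,
        MvPolynomial.eval
          (twistCoords (R.mulVec ω) ((R.mulVec ω) ⨯₃ r + R.mulVec v))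
            (homogeneousComponent d f)
          = MvPolynomial.eval (twistCoords ω v) (homogeneousComponent d f) := by
  intro R h1 h2 r ω v
  have hσ : aeval (Φg R r) (homogeneousComponent d f) = homogeneousComponent d f := by
    rw [aeval_homogeneousComponent _ (Φg_homog R r) f d, sigma_fix f hf R h1 h2 r]
  have hx : ∀ p : MvPolynomial (Fin 6) ℝ,
      eval (twistCoords ω v) (aeval (Φg R r) p)
        = eval (twistCoords (R.mulVec ω) ((R.mulVec ω) ⨯₃ r + R.mulVec v)) p := by
    intro p
    have hω : ωof (twistCoords ω v) = ω := by
      funext i; rw [ωof, twistCoords, Fin.append_left]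
    have hv : vof (twistCoords ω v) = v := by
      funext i; rw [vof, twistCoords, Fin.append_right]
    have hfun : (fun i => eval (twistCoords ω v) (Φg R r i))
        = twistCoords (R.mulVec ω) ((R.mulVec ω) ⨯₃ r + R.mulVec v) := by
      funext j
      rw [eval_Φg, hω, hv]
    rw [eval_aeval', hfun]
  rw [← hx (homogeneousComponent d f), hσ]


-- real pointwise scaled invariance
lemma real_scaled_inv (fd : MvPolynomial (Fin 6) ℝ) {d : ℕ} (hd : fd.IsHomogeneous d)
    (hfd : ∀ R : Matrix (Fin 3) (Fin 3) ℝ, Rᵀ * R = 1 → R.det = 1 →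
      ∀ r ω v : Fin 3 → ℝ,
        eval (twistCoords (R.mulVec ω) ((R.mulVec ω) ⨯₃ r + R.mulVec v)) fd
          = eval (twistCoords ω v) fd)
    (w x y z : ℝ) (r ω v : Fin 3 → ℝ) :
    eval (twistCoords ((qM w x y z).mulVec ω)
        (((qM w x y z).mulVec ω) ⨯₃ r + (qM w x y z).mulVec v)) fd
      = (qρ w x y z)^d * eval (twistCoords ω v) fd := by
  by_cases hρ : qρ w x y z = 0
  · have hw : w = 0 := by have := hρ; rw [qρ] at this; nlinarith [sq_nonneg w, sq_nonneg x, sq_nonneg y, sq_nonneg z]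
    have hx : x = 0 := by have := hρ; rw [qρ] at this; nlinarith [sq_nonneg w, sq_nonneg x, sq_nonneg y, sq_nonneg z]
    have hy : y = 0 := by have := hρ; rw [qρ] at this; nlinarith [sq_nonneg w, sq_nonneg x, sq_nonneg y, sq_nonneg z]
    have hz : z = 0 := by have := hρ; rw [qρ] at this; nlinarith [sq_nonneg w, sq_nonneg x, sq_nonneg y, sq_nonneg z]
    subst hw hx hy hz
    rw [qM_zero, hρ]
    have hA : (0 : Matrix (Fin 3) (Fin 3) ℝ).mulVec ω = 0 := Matrix.zero_mulVec ω
    have hB : ((0 : Fin 3 → ℝ) ⨯₃ r + (0 : Matrix (Fin 3) (Fin 3) ℝ).mulVec v)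
        = (0 : Fin 3 → ℝ) := by
      rw [Matrix.zero_mulVec, map_zero, LinearMap.zero_apply, add_zero]
    rw [hA, hB]
    have h0 : twistCoords 0 0 = (0:ℝ) • twistCoords ω v := by
      funext j
      refine Fin.addCases (m := 3) (n := 3) (fun i => ?_) (fun i => ?_) j
      · rw [twistCoords, Fin.append_left]; simp
      · rw [twistCoords, Fin.append_right]; simp
    rw [h0, eval_smul_homog hd]
  · set ρ := qρ w x y z with hρdef
    set M := qM w x y z with hMdef
    set R := ρ⁻¹ • M with hRdef
    have h1 : Rᵀ * R = 1 := by
      rw [hRdef, Matrix.transpose_smul, Matrix.smul_mul, Matrix.mul_smul, qM_transpose_mul,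
        smul_smul, smul_smul]
      have hone : ρ⁻¹ * ρ⁻¹ * qρ w x y z ^ 2 = 1 := by
        rw [← hρdef]; field_simp
      rw [hone, one_smul]
    have h2 : R.det = 1 := by
      rw [hRdef, Matrix.det_smul, qM_det]
      simp only [Fintype.card_fin]
      field_simp
      rw [← hρdef]
    have hkey : twistCoords (M.mulVec ω) ((M.mulVec ω) ⨯₃ r + M.mulVec v)
        = ρ • twistCoords (R.mulVec ω) ((R.mulVec ω) ⨯₃ r + R.mulVec v) := by
      have hRm : ∀ u : Fin 3 → ℝ, R.mulVec u = ρ⁻¹ • (M.mulVec u) := by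
        intro u; rw [hRdef, Matrix.smul_mulVec]
      funext j
      refine Fin.addCases (m := 3) (n := 3) (fun i => ?_) (fun i => ?_) j
      · rw [twistCoords, Fin.append_left, Pi.smul_apply, twistCoords, Fin.append_left,
          hRm, Pi.smul_apply, smul_eq_mul, smul_eq_mul]
        field_simp
      · rw [twistCoords, Fin.append_right, Pi.smul_apply, twistCoords, Fin.append_right,
          hRm, hRm]
        rw [Pi.add_apply, Pi.add_apply, cross_apply, cross_apply]
        fin_cases i <;>
          simp only [Pi.smul_apply, smul_eq_mul, Matrix.cons_val_zero, Matrix.cons_val_one,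
            Matrix.head_cons, Matrix.cons_val_two, Matrix.tail_cons, Pi.add_apply, Fin.reduceFinMk, Matrix.cons_val] <;>
          field_simp <;> ring
    rw [hkey, eval_smul_homog hd, hfd R h1 h2 r ω v]

-- 13-variable polynomial identity
noncomputable def ωp : Fin 3 → MvPolynomial (Fin 13) ℝ := ![X 7, X 8, X 9]
noncomputable def vp : Fin 3 → MvPolynomial (Fin 13) ℝ := ![X 10, X 11, X 12]
noncomputable def rp : Fin 3 → MvPolynomial (Fin 13) ℝ := ![X 4, X 5, X 6]
noncomputable def Mp : Matrix (Fin 3) (Fin 3) (MvPolynomial (Fin 13) ℝ) :=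
  qM (X 0) (X 1) (X 2) (X 3)
noncomputable def Φ13 : Fin 6 → MvPolynomial (Fin 13) ℝ :=
  Fin.append (Mp.mulVec ωp) ((Mp.mulVec ωp) ⨯₃ rp + Mp.mulVec vp)
noncomputable def emb13 : Fin 6 → MvPolynomial (Fin 13) ℝ := Fin.append ωp vp
noncomputable def ρp : MvPolynomial (Fin 13) ℝ := qρ (X 0) (X 1) (X 2) (X 3)

lemma eval_Φ13 (t : Fin 13 → ℝ) :
    (fun j => eval t (Φ13 j))
      = twistCoords ((qM (t 0) (t 1) (t 2) (t 3)).mulVec ![t 7, t 8, t 9])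
        (((qM (t 0) (t 1) (t 2) (t 3)).mulVec ![t 7, t 8, t 9]) ⨯₃ ![t 4, t 5, t 6]
          + (qM (t 0) (t 1) (t 2) (t 3)).mulVec ![t 10, t 11, t 12]) := by
  funext j
  refine Fin.addCases (m := 3) (n := 3) (fun i => ?_) (fun i => ?_) j
  · rw [Φ13, Fin.append_left, twistCoords, Fin.append_left]
    fin_cases i <;>
      simp [Mp, ωp, qM, Matrix.mulVec, dotProduct, Fin.sum_univ_three]
  · rw [Φ13, Fin.append_right, twistCoords, Fin.append_right]
    rw [Pi.add_apply, Pi.add_apply, cross_apply, cross_apply]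
    fin_cases i <;>
      simp [Mp, ωp, vp, rp, qM, Matrix.mulVec, dotProduct, Fin.sum_univ_three] <;>
      ring

lemma eval_emb13 (t : Fin 13 → ℝ) :
    (fun j => eval t (emb13 j)) = twistCoords ![t 7, t 8, t 9] ![t 10, t 11, t 12] := by
  funext j
  refine Fin.addCases (m := 3) (n := 3) (fun i => ?_) (fun i => ?_) j
  · rw [emb13, Fin.append_left, twistCoords, Fin.append_left]
    fin_cases i <;> simp [ωp]
  · rw [emb13, Fin.append_right, twistCoords, Fin.append_right]
    fin_cases i <;> simp [vp]

lemma PI (fd : MvPolynomial (Fin 6) ℝ) {d : ℕ} (hd : fd.IsHomogeneous d)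
    (hfd : ∀ R : Matrix (Fin 3) (Fin 3) ℝ, Rᵀ * R = 1 → R.det = 1 →
      ∀ r ω v : Fin 3 → ℝ,
        eval (twistCoords (R.mulVec ω) ((R.mulVec ω) ⨯₃ r + R.mulVec v)) fd
          = eval (twistCoords ω v) fd) :
    aeval Φ13 fd = ρp ^ d * aeval emb13 fd := by
  apply MvPolynomial.funext; intro t
  rw [_root_.map_mul, map_pow, eval_aeval', eval_aeval', eval_Φ13, eval_emb13]
  have hρ : eval t ρp = qρ (t 0) (t 1) (t 2) (t 3) := by simp [ρp, qρ]
  rw [hρ]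
  exact real_scaled_inv fd hd hfd (t 0) (t 1) (t 2) (t 3) ![t 4, t 5, t 6] ![t 7, t 8, t 9]
    ![t 10, t 11, t 12]


lemma CI (fd : MvPolynomial (Fin 6) ℝ) {d : ℕ} (hd : fd.IsHomogeneous d)
    (hfd : ∀ R : Matrix (Fin 3) (Fin 3) ℝ, Rᵀ * R = 1 → R.det = 1 →
      ∀ r ω v : Fin 3 → ℝ,
        eval (twistCoords (R.mulVec ω) ((R.mulVec ω) ⨯₃ r + R.mulVec v)) fd
          = eval (twistCoords ω v) fd)
    (w x y z : ℂ) (r ω v : Fin 3 → ℂ) :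
    aeval (Fin.append ((qM w x y z).mulVec ω)
        (((qM w x y z).mulVec ω) ⨯₃ r + (qM w x y z).mulVec v)) fd
      = (qρ w x y z)^d * aeval (Fin.append ω v) fd := by
  have h := congrArg (aeval (![w,x,y,z,r 0,r 1,r 2,ω 0,ω 1,ω 2,v 0,v 1,v 2] : Fin 13 → ℂ))
    (PI fd hd hfd)
  set t : Fin 13 → ℂ := ![w,x,y,z,r 0,r 1,r 2,ω 0,ω 1,ω 2,v 0,v 1,v 2] with ht
  have e0 : t 0 = w := rfl
  have e1 : t 1 = x := rfl
  have e2 : t 2 = y := rfl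
  have e3 : t 3 = z := rfl
  have e4 : t 4 = r 0 := rfl
  have e5 : t 5 = r 1 := rfl
  have e6 : t 6 = r 2 := rfl
  have e7 : t 7 = ω 0 := rfl
  have e8 : t 8 = ω 1 := rfl
  have e9 : t 9 = ω 2 := rfl
  have e10 : t 10 = v 0 := rfl
  have e11 : t 11 = v 1 := rfl
  have e12 : t 12 = v 2 := rfl
  rw [aevalC_aeval, _root_.map_mul, map_pow, aevalC_aeval] at h
  have hω3 : ω = ![ω 0, ω 1, ω 2] := by
    funext i; fin_cases i <;> rfl
  have hv3 : v = ![v 0, v 1, v 2] := by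
    funext i; fin_cases i <;> rfl
  have hr3 : r = ![r 0, r 1, r 2] := by
    funext i; fin_cases i <;> rfl
  have hΦ : (fun j => aeval t (Φ13 j))
      = Fin.append ((qM w x y z).mulVec ω)
        (((qM w x y z).mulVec ω) ⨯₃ r + (qM w x y z).mulVec v) := by
    funext j
    refine Fin.addCases (m := 3) (n := 3) (fun i => ?_) (fun i => ?_) j
    · rw [Φ13, Fin.append_left, Fin.append_left]
      fin_cases i <;>
        simp [Mp, ωp, qM, Matrix.mulVec, dotProduct, Fin.sum_univ_three,
          e0, e1, e2, e3, e7, e8, e9]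
    · rw [Φ13, Fin.append_right, Fin.append_right]
      rw [Pi.add_apply, Pi.add_apply, cross_apply, cross_apply]
      fin_cases i <;>
        simp [Mp, ωp, vp, rp, qM, Matrix.mulVec, dotProduct, Fin.sum_univ_three,
          e0, e1, e2, e3, e4, e5, e6, e7, e8, e9, e10, e11, e12] <;>
        ring
  have hemb : (fun j => aeval t (emb13 j)) = Fin.append ω v := by
    funext j
    refine Fin.addCases (m := 3) (n := 3) (fun i => ?_) (fun i => ?_) j
    · rw [emb13, Fin.append_left, Fin.append_left]
      fin_cases i <;> simp [ωp, e7, e8, e9]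
    · rw [emb13, Fin.append_right, Fin.append_right]
      fin_cases i <;> simp [vp, e10, e11, e12]
  have hρv : aeval t ρp = qρ w x y z := by
    simp [ρp, qρ, e0, e1, e2, e3]
  rw [hΦ, hemb, hρv] at h
  exact h


section Trans

variable (fd : MvPolynomial (Fin 6) ℝ) {d : ℕ}

def dot3 (u v : Fin 3 → ℂ) : ℂ := u 0 * v 0 + u 1 * v 1 + u 2 * v 2

lemma dot3_qM (w x y z : ℂ) (u u' : Fin 3 → ℂ) :
    dot3 ((qM w x y z).mulVec u) ((qM w x y z).mulVec u')
      = (qρ w x y z)^2 * dot3 u u' := by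
  simp [dot3, qM, qρ, Matrix.mulVec, dotProduct, Fin.sum_univ_three]; ring

variable (hd : fd.IsHomogeneous d)
    (hCI : ∀ (w x y z : ℂ) (r ω v : Fin 3 → ℂ),
      aeval (Fin.append ((qM w x y z).mulVec ω)
          (((qM w x y z).mulVec ω) ⨯₃ r + (qM w x y z).mulVec v)) fd
        = (qρ w x y z)^d * aeval (Fin.append ω v) fd)

lemma append_smul (c : ℂ) (u v : Fin 3 → ℂ) :
    Fin.append (c • u) (c • v) = c • Fin.append u v := by
  funext j
  refine Fin.addCases (m := 3) (n := 3) (fun i => ?_) (fun i => ?_) j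
  · rw [Fin.append_left, Pi.smul_apply, Pi.smul_apply, Fin.append_left]
  · rw [Fin.append_right, Pi.smul_apply, Pi.smul_apply, Fin.append_right]

include hd hCI in
lemma trans_move (ω v : Fin 3 → ℂ) (r : Fin 3 → ℂ) :
    aeval (Fin.append ω (ω ⨯₃ r + v)) fd = aeval (Fin.append ω v) fd := by
  have h := hCI 1 0 0 0 r ω v
  rw [qM_one] at h
  simpa [qρ, Matrix.one_mulVec] using h

include hd hCI in
lemma trans_single (a : ℂ) (ha : a ≠ 0) (ω ω' v : Fin 3 → ℂ)
    (hω : dot3 ω ω = a) (hω' : dot3 ω' ω' = a) (hs : a + dot3 ω ω' ≠ 0) :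
    ∃ v', aeval (Fin.append ω' v') fd = aeval (Fin.append ω v) fd
      ∧ dot3 ω' v' = dot3 ω v := by
  have hω2 : ω 0^2 + ω 1^2 + ω 2^2 = a := by rw [← hω, dot3]; ring
  have hω'2 : ω' 0^2 + ω' 1^2 + ω' 2^2 = a := by rw [← hω', dot3]; ring
  set s : ℂ := a + (ω 0*ω' 0 + ω 1*ω' 1 + ω 2*ω' 2) with hsdef
  have hs' : s ≠ 0 := by
    have : a + dot3 ω ω' = s := by rw [dot3, hsdef]
    rwa [this] at hs
  set ρ : ℂ := 2*a*s with hρdef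
  have hρ : ρ ≠ 0 := by
    apply mul_ne_zero (mul_ne_zero two_ne_zero ha) hs'
  set M : Matrix (Fin 3) (Fin 3) ℂ :=
    qM s (ω 1*ω' 2 - ω 2*ω' 1) (ω 2*ω' 0 - ω 0*ω' 2) (ω 0*ω' 1 - ω 1*ω' 0) with hMdef
  have hMω : M.mulVec ω = ρ • ω' := by
    funext i
    rw [hMdef, hsdef, qM_rot a ω ω' hω2 hω'2 i, Pi.smul_apply, smul_eq_mul, hρdef, hsdef]
  have hρval : qρ s (ω 1*ω' 2 - ω 2*ω' 1) (ω 2*ω' 0 - ω 0*ω' 2) (ω 0*ω' 1 - ω 1*ω' 0) = ρ := by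
    rw [hsdef, hρdef, hsdef]
    exact qM_rot_rho a ω ω' hω2 hω'2
  refine ⟨ρ⁻¹ • (M.mulVec v), ?_, ?_⟩
  · have h := hCI s (ω 1*ω' 2 - ω 2*ω' 1) (ω 2*ω' 0 - ω 0*ω' 2) (ω 0*ω' 1 - ω 1*ω' 0) 0 ω v
    rw [← hMdef, hρval, hMω] at h
    have hcross : ((ρ • ω') ⨯₃ (0 : Fin 3 → ℂ)) = 0 := map_zero _
    rw [hcross, zero_add] at h
    have hMv : M.mulVec v = ρ • (ρ⁻¹ • (M.mulVec v)) := by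
      rw [smul_smul, mul_inv_cancel₀ hρ, one_smul]
    rw [hMv, append_smul] at h
    rw [aeval_smul_homogC hd] at h
    exact mul_left_cancel₀ (pow_ne_zero d hρ) h
  · have hω'eq : ω' = ρ⁻¹ • (M.mulVec ω) := by
      rw [hMω, smul_smul, inv_mul_cancel₀ hρ, one_smul]
    rw [hω'eq]
    have hdd : dot3 (ρ⁻¹ • (M.mulVec ω)) (ρ⁻¹ • (M.mulVec v))
        = ρ⁻¹ * ρ⁻¹ * dot3 (M.mulVec ω) (M.mulVec v) := by
      simp [dot3, Pi.smul_apply, smul_eq_mul]; ring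
    rw [hdd, hMdef, dot3_qM, hρval]
    field_simp

noncomputable def Ωv (a : ℂ) : Fin 3 → ℂ := ![(1+a)/2, Complex.I*(1-a)/2, 0]
noncomputable def Vv (b : ℂ) : Fin 3 → ℂ := ![b, -(Complex.I*b), 0]

lemma dot3_Ω (a : ℂ) : dot3 (Ωv a) (Ωv a) = a := by
  simp only [dot3, Ωv, Matrix.cons_val_zero, Matrix.cons_val_one, Matrix.head_cons,
    Matrix.cons_val_two, Matrix.tail_cons]
  linear_combination ((1 - a)^2/4) * Complex.I_sq

lemma dot3_ΩV (a b : ℂ) : dot3 (Ωv a) (Vv b) = b := by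
  simp only [dot3, Ωv, Vv, Matrix.cons_val_zero, Matrix.cons_val_one, Matrix.head_cons,
    Matrix.cons_val_two, Matrix.tail_cons]
  linear_combination (-(b*(1 - a))/2) * Complex.I_sq

lemma dot3_negΩ (a : ℂ) : dot3 (-(Ωv a)) (-(Ωv a)) = a := by
  have := dot3_Ω a
  simpa [dot3] using this

lemma M3_mulVec (u : Fin 3 → ℂ) :
    (qM (0:ℂ) 0 0 1).mulVec u = ![-(u 0), -(u 1), u 2] := by
  funext i
  fin_cases i <;>
    simp [qM, Matrix.mulVec, dotProduct, Fin.sum_univ_three]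

lemma dot3_M3 (u w : Fin 3 → ℂ) :
    dot3 ((qM (0:ℂ) 0 0 1).mulVec u) ((qM (0:ℂ) 0 0 1).mulVec w) = dot3 u w := by
  rw [M3_mulVec, M3_mulVec]
  simp [dot3]

include hd hCI in
lemma trans_flip (ω v : Fin 3 → ℂ) :
    aeval (Fin.append ((qM (0:ℂ) 0 0 1).mulVec ω) ((qM (0:ℂ) 0 0 1).mulVec v)) fd
      = aeval (Fin.append ω v) fd := by
  have h := hCI 0 0 0 1 0 ω v
  have hcross : (((qM (0:ℂ) 0 0 1).mulVec ω) ⨯₃ (0 : Fin 3 → ℂ)) = 0 := map_zero _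
  rw [hcross, zero_add] at h
  have hρ1 : qρ (0:ℂ) 0 0 1 = 1 := by simp [qρ]
  rw [hρ1, one_pow, one_mul] at h
  exact h

include hd hCI in
lemma trans_norm (a : ℂ) (ha : a ≠ 0) (ω v : Fin 3 → ℂ) (hω : dot3 ω ω = a) :
    ∃ v₂, aeval (Fin.append (Ωv a) v₂) fd = aeval (Fin.append ω v) fd
      ∧ dot3 (Ωv a) v₂ = dot3 ω v := by
  by_cases hs : a + dot3 ω (Ωv a) ≠ 0
  · exact trans_single fd hd hCI a ha ω (Ωv a) v hω (dot3_Ω a) hs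
  · push_neg at hs
    have hs' : a + dot3 ω (-(Ωv a)) ≠ 0 := by
      have hneg : dot3 ω (-(Ωv a)) = -(dot3 ω (Ωv a)) := by simp [dot3]; ring
      rw [hneg]
      have : dot3 ω (Ωv a) = -a := by linear_combination hs
      rw [this]
      simpa using (mul_ne_zero two_ne_zero ha)
    obtain ⟨v₁, hF1, hd1⟩ := trans_single fd hd hCI a ha ω (-(Ωv a)) v hω (dot3_negΩ a) hs'
    have hflip := trans_flip fd hd hCI (-(Ωv a)) v₁
    have hMΩ : (qM (0:ℂ) 0 0 1).mulVec (-(Ωv a)) = Ωv a := by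
      rw [M3_mulVec]
      funext i
      fin_cases i <;> simp [Ωv]
    rw [hMΩ] at hflip
    refine ⟨(qM (0:ℂ) 0 0 1).mulVec v₁, ?_, ?_⟩
    · rw [hflip, hF1]
    · rw [← hMΩ, dot3_M3, hd1]
  
include hd hCI in
lemma trans_fixv (a b : ℂ) (ha : a ≠ 0) (v₂ : Fin 3 → ℂ) (hb : dot3 (Ωv a) v₂ = b) :
    aeval (Fin.append (Ωv a) (Vv b)) fd = aeval (Fin.append (Ωv a) v₂) fd := by
  have key : ∀ u w : Fin 3 → ℂ, u ⨯₃ (u ⨯₃ w) = (dot3 u w) • u - (dot3 u u) • w := by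
    intro u w
    funext i
    rw [cross_apply, cross_apply]
    fin_cases i <;>
      simp [dot3, Pi.smul_apply, smul_eq_mul] <;> ring
  set w : Fin 3 → ℂ := Vv b - v₂ with hwdef
  have hdw : dot3 (Ωv a) w = 0 := by
    have hlin : dot3 (Ωv a) w = dot3 (Ωv a) (Vv b) - dot3 (Ωv a) v₂ := by
      simp [dot3, hwdef]; ring
    rw [hlin, dot3_ΩV, hb, sub_self]
  have hr : (Ωv a) ⨯₃ ((-(a⁻¹)) • ((Ωv a) ⨯₃ w)) + v₂ = Vv b := by
    rw [LinearMap.map_smul, key, hdw, dot3_Ω, zero_smul, zero_sub, smul_neg, smul_smul]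
    have hc : -a⁻¹ * a = -1 := by field_simp
    rw [hc, neg_smul, one_smul, neg_neg, hwdef, sub_add_cancel]
  calc aeval (Fin.append (Ωv a) (Vv b)) fd
      = aeval (Fin.append (Ωv a) ((Ωv a) ⨯₃ ((-(a⁻¹)) • ((Ωv a) ⨯₃ w)) + v₂)) fd := by rw [hr]
    _ = aeval (Fin.append (Ωv a) v₂) fd := trans_move fd hd hCI (Ωv a) v₂ _

include hd hCI in
lemma trans_main (ω v : Fin 3 → ℂ) (ha : dot3 ω ω ≠ 0) :
    aeval (Fin.append ω v) fd
      = aeval (Fin.append (Ωv (dot3 ω ω)) (Vv (dot3 ω v))) fd := by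
  obtain ⟨v₂, hF, hdot⟩ := trans_norm fd hd hCI (dot3 ω ω) ha ω v rfl
  rw [← hF, trans_fixv fd hd hCI (dot3 ω ω) (dot3 ω v) ha v₂ hdot]

end Trans


lemma trans_main' (fd : MvPolynomial (Fin 6) ℝ) {d : ℕ} (hd : fd.IsHomogeneous d)
    (hfd : ∀ R : Matrix (Fin 3) (Fin 3) ℝ, Rᵀ * R = 1 → R.det = 1 →
      ∀ r ω v : Fin 3 → ℝ,
        eval (twistCoords (R.mulVec ω) ((R.mulVec ω) ⨯₃ r + R.mulVec v)) fd
          = eval (twistCoords ω v) fd)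
    (ω v : Fin 3 → ℂ) (ha : dot3 ω ω ≠ 0) :
    aeval (Fin.append ω v) fd
      = aeval (Fin.append (Ωv (dot3 ω ω)) (Vv (dot3 ω v))) fd :=
  trans_main fd hd (CI fd hd hfd) ω v ha

def dotR (u v : Fin 3 → ℝ) : ℝ := u 0 * v 0 + u 1 * v 1 + u 2 * v 2

noncomputable def ΦP : Fin 6 → MvPolynomial (Fin 2) ℂ :=
  ![C ((1:ℂ)/2) * (1 + X 0), C (Complex.I/2) * (1 - X 0), 0,
    X 1, C (-Complex.I) * X 1, 0]

noncomputable def Pc (fd : MvPolynomial (Fin 6) ℝ) : MvPolynomial (Fin 2) ℂ :=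
  aeval ΦP fd

lemma eval_Pc (fd : MvPolynomial (Fin 6) ℝ) (a b : ℂ) :
    eval ![a, b] (Pc fd) = aeval (Fin.append (Ωv a) (Vv b)) fd := by
  have h := comp_aeval_apply
    ((aeval (![a,b] : Fin 2 → ℂ) : MvPolynomial (Fin 2) ℂ →ₐ[ℂ] ℂ).restrictScalars ℝ)
    (f := ΦP) (p := fd)
  have hres : ∀ p : MvPolynomial (Fin 2) ℂ,
      ((aeval (![a,b] : Fin 2 → ℂ) : MvPolynomial (Fin 2) ℂ →ₐ[ℂ] ℂ).restrictScalars ℝ) p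
        = eval ![a,b] p := by
    intro p; rw [AlgHom.coe_restrictScalars', aeval_eq_eval']
  rw [hres] at h
  rw [Pc, h]
  have happ : Fin.append (Ωv a) (Vv b)
      = ![(1+a)/2, Complex.I*(1-a)/2, 0, b, -(Complex.I*b), 0] := by
    funext j; fin_cases j <;> rfl
  have hvec : (fun i => ((aeval (![a,b] : Fin 2 → ℂ) :
        MvPolynomial (Fin 2) ℂ →ₐ[ℂ] ℂ).restrictScalars ℝ) (ΦP i))
      = Fin.append (Ωv a) (Vv b) := by
    rw [happ]
    funext j
    rw [hres (ΦP j)]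
    fin_cases j <;> first | rfl | (simp [ΦP]; try ring) | (simp [ΦP, Matrix.cons_val_succ, Matrix.cons_val_succ']; try ring)
  rw [hvec]

section S2
variable (fd : MvPolynomial (Fin 6) ℝ) {d : ℕ} (hd : fd.IsHomogeneous d)
  (hfd : ∀ R : Matrix (Fin 3) (Fin 3) ℝ, Rᵀ * R = 1 → R.det = 1 →
      ∀ r ω v : Fin 3 → ℝ,
        eval (twistCoords (R.mulVec ω) ((R.mulVec ω) ⨯₃ r + R.mulVec v)) fd
          = eval (twistCoords ω v) fd)

include hd hfd in
lemma pointwise_real (ω v : Fin 3 → ℝ) (hq : dotR ω ω ≠ 0) :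
    eval (twistCoords ω v) fd = eval ![dotR ω ω, dotR ω v] (reP (Pc fd)) := by
  set ωc : Fin 3 → ℂ := fun i => ((ω i : ℝ) : ℂ) with hωc
  set vc : Fin 3 → ℂ := fun i => ((v i : ℝ) : ℂ) with hvc
  have hcoe : (fun i => ((twistCoords ω v i : ℝ) : ℂ)) = Fin.append ωc vc := by
    funext j
    refine Fin.addCases (m := 3) (n := 3) (fun i => ?_) (fun i => ?_) j
    · rw [Fin.append_left, hωc]; rw [twistCoords, Fin.append_left]
    · rw [Fin.append_right, hvc]; rw [twistCoords, Fin.append_right]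
  have h1 : aeval (Fin.append ωc vc) fd = ((eval (twistCoords ω v) fd : ℝ) : ℂ) := by
    rw [← hcoe, aeval_ofReal]
  have hdot1 : dot3 ωc ωc = ((dotR ω ω : ℝ) : ℂ) := by
    simp [dot3, dotR, hωc]
  have hdot2 : dot3 ωc vc = ((dotR ω v : ℝ) : ℂ) := by
    simp [dot3, dotR, hωc, hvc]
  have hq' : dot3 ωc ωc ≠ 0 := by
    rw [hdot1]
    exact_mod_cast hq
  have h2 := trans_main' fd hd hfd ωc vc hq'
  rw [← eval_Pc, hdot1, hdot2] at h2
  have h3 : eval ![dotR ω ω, dotR ω v] (reP (Pc fd))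
      = (eval (fun i => ((![dotR ω ω, dotR ω v] : Fin 2 → ℝ) i : ℂ)) (Pc fd)).re := by
    rw [eval_reP]
  have h4 : (fun i => ((![dotR ω ω, dotR ω v] : Fin 2 → ℝ) i : ℂ))
      = ![((dotR ω ω : ℝ) : ℂ), ((dotR ω v : ℝ) : ℂ)] := by
    funext i; fin_cases i <;> rfl
  rw [h3, h4, ← h2, h1, Complex.ofReal_re]

end S2

noncomputable def q6 : MvPolynomial (Fin 6) ℝ := X 0 * X 0 + X 1 * X 1 + X 2 * X 2
noncomputable def k6 : MvPolynomial (Fin 6) ℝ := X 0 * X 3 + X 1 * X 4 + X 2 * X 5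

lemma eval_q6 (x : Fin 6 → ℝ) : eval x q6 = dotR (ωof x) (ωof x) := by
  simp [q6, dotR, ωof]

lemma eval_k6 (x : Fin 6 → ℝ) : eval x k6 = dotR (ωof x) (vof x) := by
  simp [k6, dotR, ωof, vof]

lemma exists_P (fd : MvPolynomial (Fin 6) ℝ) {d : ℕ} (hd : fd.IsHomogeneous d)
    (hfd : ∀ R : Matrix (Fin 3) (Fin 3) ℝ, Rᵀ * R = 1 → R.det = 1 →
      ∀ r ω v : Fin 3 → ℝ,
        eval (twistCoords (R.mulVec ω) ((R.mulVec ω) ⨯₃ r + R.mulVec v)) fd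
          = eval (twistCoords ω v) fd) :
    ∃ P : MvPolynomial (Fin 2) ℝ, fd = aeval ![q6, k6] P := by
  refine ⟨reP (Pc fd), ?_⟩
  have hmain : q6 * (fd - aeval ![q6, k6] (reP (Pc fd))) = 0 := by
    apply MvPolynomial.funext
    intro x
    rw [_root_.map_mul, map_zero, _root_.map_sub]
    by_cases hq : dotR (ωof x) (ωof x) = 0
    · rw [eval_q6, hq, zero_mul]
    · have heval2 : eval x (aeval ![q6, k6] (reP (Pc fd)))
          = eval ![dotR (ωof x) (ωof x), dotR (ωof x) (vof x)] (reP (Pc fd)) := by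
        rw [eval_aeval']
        have hvec2 : (fun i => eval x ((![q6, k6] : Fin 2 → MvPolynomial (Fin 6) ℝ) i))
            = ![dotR (ωof x) (ωof x), dotR (ωof x) (vof x)] := by
          funext i
          fin_cases i <;> simp [eval_q6, eval_k6]
        rw [hvec2]
      have hx : x = twistCoords (ωof x) (vof x) := (append_ωof_vof x).symm
      have hdiff := pointwise_real fd hd hfd (ωof x) (vof x) hq
      rw [← hx] at hdiff
      rw [heval2, ← hdiff, sub_self, mul_zero]
  have hq6 : q6 ≠ 0 := by
    intro h
    have := congrArg (eval (fun _ => (1:ℝ))) h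
    simp [q6] at this
    norm_num at this
  rcases mul_eq_zero.mp hmain with h | h
  · exact absurd h hq6
  · exact sub_eq_zero.mp h


end AdjInv


open AdjInv in
theorem adjoint_invariants_generated_by_klein_and_killing
    (f : MvPolynomial (Fin 6) ℝ)
    (hf : ∀ R : Matrix (Fin 3) (Fin 3) ℝ, Rᵀ * R = 1 → R.det = 1 →
      ∀ r ω v : Fin 3 → ℝ,
        MvPolynomial.eval
          (twistCoords (R.mulVec ω) ((R.mulVec ω) ⨯₃ r + R.mulVec v)) f
          = MvPolynomial.eval (twistCoords ω v) f) :
    f ∈ Algebra.adjoin ℝ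
      ({X 0 * X 0 + X 1 * X 1 + X 2 * X 2,
        X 0 * X 3 + X 1 * X 4 + X 2 * X 5} :
        Set (MvPolynomial (Fin 6) ℝ)) := by
  have hset : ({X 0 * X 0 + X 1 * X 1 + X 2 * X 2,
      X 0 * X 3 + X 1 * X 4 + X 2 * X 5} : Set (MvPolynomial (Fin 6) ℝ))
      = Set.range ![q6, k6] := by
    ext u
    constructor
    · rintro (rfl | rfl)
      · exact ⟨0, rfl⟩
      · exact ⟨1, rfl⟩
    · rintro ⟨i, rfl⟩
      fin_cases i
      · exact Or.inl rfl
      · exact Or.inr rfl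
  rw [hset, Algebra.adjoin_range_eq_range_aeval]
  have hchoice : ∀ d : ℕ, ∃ P : MvPolynomial (Fin 2) ℝ,
      homogeneousComponent d f = aeval ![q6, k6] P := fun d =>
    exists_P (homogeneousComponent d f) (homogeneousComponent_isHomogeneous d f)
      (hf_component f hf d)
  choose P hP using hchoice
  refine ⟨∑ d ∈ Finset.range (f.totalDegree + 1), P d, ?_⟩
  rw [map_sum]
  conv_rhs => rw [← sum_homogeneousComponent f]
  exact Finset.sum_congr rfl fun d _ => (hP d).symm
end

section
/- For two twists with ω₁, ω₂ ≠ 0, write cos α = (ω₁·ω₂)/√((ω₁·ω₁)(ω₂·ω₂)). Then both the quantity (ω₁·ω₂)/√((ω₁·ω₁)(ω₂·ω₂)) and the quantity (ω₁·v₂ + ω₂·v₁)/√((ω₁·ω₁)(ω₂·ω₂)) are invariant under the simultaneous adjoint action of SE(3). -/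
open Matrix

private lemma dot_rot (R : Matrix (Fin 3) (Fin 3) ℝ) (hR : Rᵀ * R = 1)
    (x y : Fin 3 → ℝ) : (R.mulVec x) ⬝ᵥ (R.mulVec y) = x ⬝ᵥ y := by
  rw [Matrix.dotProduct_mulVec, ← Matrix.vecMul_transpose, Matrix.vecMul_vecMul, hR,
    Matrix.vecMul_one]

theorem dh_quantities_invariant
    (R : Matrix (Fin 3) (Fin 3) ℝ) (hR : Rᵀ * R = 1) (hdet : R.det = 1)
    (r ω₁ v₁ ω₂ v₂ : Fin 3 → ℝ) (h₁ : ω₁ ≠ 0) (h₂ : ω₂ ≠ 0) :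
    ((R.mulVec ω₁) ⬝ᵥ (R.mulVec ω₂)) /
        Real.sqrt (((R.mulVec ω₁) ⬝ᵥ (R.mulVec ω₁)) * ((R.mulVec ω₂) ⬝ᵥ (R.mulVec ω₂)))
      = (ω₁ ⬝ᵥ ω₂) / Real.sqrt ((ω₁ ⬝ᵥ ω₁) * (ω₂ ⬝ᵥ ω₂)) ∧
    ((R.mulVec ω₁) ⬝ᵥ (crossProduct (R.mulVec ω₂) r + R.mulVec v₂)
        + (R.mulVec ω₂) ⬝ᵥ (crossProduct (R.mulVec ω₁) r + R.mulVec v₁)) /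
        Real.sqrt (((R.mulVec ω₁) ⬝ᵥ (R.mulVec ω₁)) * ((R.mulVec ω₂) ⬝ᵥ (R.mulVec ω₂)))
      = (ω₁ ⬝ᵥ v₂ + ω₂ ⬝ᵥ v₁) / Real.sqrt ((ω₁ ⬝ᵥ ω₁) * (ω₂ ⬝ᵥ ω₂)) := by
  have cross : ∀ a b : Fin 3 → ℝ, a ⬝ᵥ (crossProduct b r) + b ⬝ᵥ (crossProduct a r) = 0 := by
    intro a b
    simp [crossProduct, dotProduct, Fin.sum_univ_three]
    ring
  have h := cross (R.mulVec ω₁) (R.mulVec ω₂)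
  constructor
  · rw [dot_rot R hR, dot_rot R hR, dot_rot R hR]
  · rw [dot_rot R hR, dot_rot R hR]
    congr 1
    simp only [dotProduct_add]
    rw [dot_rot R hR, dot_rot R hR]
    linarith
end

section
/- For three twists, each polynomial z₁₂₃, z₂₃₁, z₃₁₂, and each difference z₁₂₁ − z₃₂₃, z₂₃₂ − z₁₃₁, z₃₁₃ − z₂₁₂, where z_{ijk} = det of the 3×3 matrix with rows (ω₁ᵢ, ω₂ᵢ, ω₃ᵢ), (ω₁ⱼ, ω₂ⱼ, ω₃ⱼ), (v₁ₖ, v₂ₖ, v₃ₖ), is invariant under the translation action (ωₗ, vₗ) ↦ (ωₗ, ωₗ×r + vₗ) for all r ∈ ℝ³. -/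
open Matrix

/-- For three twists `(ω l, v l)`, `zdet ω v i j k` is the determinant of the 3×3 matrix
with rows `(ω₁ᵢ, ω₂ᵢ, ω₃ᵢ)`, `(ω₁ⱼ, ω₂ⱼ, ω₃ⱼ)`, `(v₁ₖ, v₂ₖ, v₃ₖ)`. -/
def zdet (ω v : Fin 3 → (Fin 3 → ℝ)) (i j k : Fin 3) : ℝ :=
  Matrix.det (Matrix.of ![fun l => ω l i, fun l => ω l j, fun l => v l k])

theorem zdet_translation_invariants
    (ω v : Fin 3 → (Fin 3 → ℝ)) (r : Fin 3 → ℝ) :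
    zdet ω (fun l => ω l ⨯₃ r + v l) 0 1 2 = zdet ω v 0 1 2 ∧
    zdet ω (fun l => ω l ⨯₃ r + v l) 1 2 0 = zdet ω v 1 2 0 ∧
    zdet ω (fun l => ω l ⨯₃ r + v l) 2 0 1 = zdet ω v 2 0 1 ∧
    zdet ω (fun l => ω l ⨯₃ r + v l) 0 1 0 - zdet ω (fun l => ω l ⨯₃ r + v l) 2 1 2
      = zdet ω v 0 1 0 - zdet ω v 2 1 2 ∧
    zdet ω (fun l => ω l ⨯₃ r + v l) 1 2 1 - zdet ω (fun l => ω l ⨯₃ r + v l) 0 2 0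
      = zdet ω v 1 2 1 - zdet ω v 0 2 0 ∧
    zdet ω (fun l => ω l ⨯₃ r + v l) 2 0 2 - zdet ω (fun l => ω l ⨯₃ r + v l) 1 0 1
      = zdet ω v 2 0 2 - zdet ω v 1 0 1 := by
  refine ⟨?_, ?_, ?_, ?_, ?_, ?_⟩ <;>
  · simp only [zdet, det_fin_three, crossProduct, Matrix.of_apply, Matrix.cons_val',
      Matrix.cons_val_zero, Matrix.cons_val_one, Matrix.head_cons, Matrix.cons_val_two,
      Matrix.tail_cons, Matrix.empty_val', Matrix.cons_val_fin_one, Matrix.head_fin_const,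
      LinearMap.mk₂_apply, Pi.add_apply]
    ring
end
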